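/- Under the assumptions of the previous symmetry identity (nonnegative random vector Y with the isomorphism property E[F(Y + Z^k)] = E[F(Y) Y_k/θ_k] for all k), it holds for every j, k ≤ n that {Z^j_k > 0} ⊆ {Z^j_j > 0} almost surely. -/

import Mathlib

open MeasureTheory ProbabilityTheory Set Filter
open scoped ENNReal Topology

/-- For nonnegative `t` and positive rate `l`, `t * exp (-(l*t)) ≤ 1/l`. -/
lemma size_biased_aux_exp_bound {l t : ℝ} (hl : 0 < l) (ht : 0 ≤ t) :
    t * Real.exp (-(l * t)) ≤ 1 / l := by
  have h : l * t ≤ Real.exp (l * t) := by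
    have := Real.add_one_le_exp (l * t); linarith
  have hexp : (0:ℝ) < Real.exp (l * t) := Real.exp_pos _
  rw [Real.exp_neg, le_div_iff₀ hl]
  calc t * (Real.exp (l * t))⁻¹ * l = (l * t) * (Real.exp (l * t))⁻¹ := by ring
    _ ≤ Real.exp (l * t) * (Real.exp (l * t))⁻¹ :=
        mul_le_mul_of_nonneg_right h (inv_nonneg.mpr hexp.le)
    _ = 1 := mul_inv_cancel₀ hexp.ne'

/-- Under the isomorphism property `E[F(Y + Z^k)] = E[F(Y) Y_k/θ_k]` for the nonnegative
random vector `Y`, one has `{Z^j_k > 0} ⊆ {Z^j_j > 0}` almost surely, for all `j, k`. -/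
theorem size_biased_support_inclusion {Ω : Type*} [MeasurableSpace Ω]
    (P : Measure Ω) [IsProbabilityMeasure P] (n : ℕ)
    (Y : Ω → Fin n → ℝ) (Z : Fin n → Ω → Fin n → ℝ)
    (hYm : Measurable Y) (hZm : ∀ k, Measurable (Z k))
    (hYpos : ∀ ω k, 0 ≤ Y ω k) (hZpos : ∀ k ω i, 0 ≤ Z k ω i)
    (θ : Fin n → ℝ) (hθpos : ∀ k, 0 < θ k) (hθfin : ∀ k, ∫ ω, Y ω k ∂P = θ k)
    (hindep : ∀ k, IndepFun Y (Z k) P)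
    (hiso : ∀ k, ∀ F : (Fin n → ℝ) → ℝ, Measurable F → (∃ C, ∀ x, |F x| ≤ C) →
      ∫ ω, F (Y ω + Z k ω) ∂P = ∫ ω, F (Y ω) * (Y ω k / θ k) ∂P) :
    ∀ j k, ∀ᵐ ω ∂P, 0 < Z j ω k → 0 < Z j ω j := by
  intro j k
  -- coordinate measurability
  have hYc : ∀ i : Fin n, Measurable fun ω => Y ω i :=
    fun i => (measurable_pi_apply i).comp hYm
  have hZc : ∀ m i : Fin n, Measurable fun ω => Z m ω i :=
    fun m i => (measurable_pi_apply i).comp (hZm m)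
  -- integrability of each coordinate of Y
  have hYint : ∀ i : Fin n, Integrable (fun ω => Y ω i) P := by
    intro i
    by_contra h
    have h2 := hθfin i
    rw [integral_undef h] at h2
    exact (hθpos i).ne' h2.symm
  -- lintegral version of the isomorphism property
  have key : ∀ (i : Fin n) (F : (Fin n → ℝ) → ℝ), Measurable F → (∀ x, 0 ≤ F x) →
      (∃ C, ∀ x, |F x| ≤ C) →
      ENNReal.ofReal (θ i) * ∫⁻ ω, ENNReal.ofReal (F (Y ω + Z i ω)) ∂P
        = ∫⁻ ω, ENNReal.ofReal (F (Y ω) * Y ω i) ∂P := by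
    intro i F hFm hFnn hFb
    obtain ⟨C, hC⟩ := hFb
    have hC0 : (0:ℝ) ≤ C := le_trans (abs_nonneg _) (hC 0)
    have h1 : Integrable (fun ω => F (Y ω + Z i ω)) P := by
      refine Integrable.mono' (integrable_const C)
        ((hFm.comp (hYm.add (hZm i))).aestronglyMeasurable) ?_
      filter_upwards with ω
      simpa [Real.norm_eq_abs] using hC (Y ω + Z i ω)
    have h2 : Integrable (fun ω => F (Y ω) * Y ω i) P := by
      refine Integrable.mono' ((hYint i).const_mul C)
        ((hFm.comp hYm).mul (hYc i)).aestronglyMeasurable ?_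
      filter_upwards with ω
      rw [Real.norm_eq_abs, abs_mul, abs_of_nonneg (hYpos ω i)]
      exact mul_le_mul_of_nonneg_right (hC _) (hYpos ω i)
    have hre : θ i * ∫ ω, F (Y ω + Z i ω) ∂P = ∫ ω, F (Y ω) * Y ω i ∂P := by
      rw [hiso i F hFm ⟨C, hC⟩, ← integral_const_mul]
      congr 1; funext ω
      have hθ := (hθpos i).ne'
      field_simp
    have hl1 : ENNReal.ofReal (∫ ω, F (Y ω + Z i ω) ∂P)
        = ∫⁻ ω, ENNReal.ofReal (F (Y ω + Z i ω)) ∂P :=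
      ofReal_integral_eq_lintegral_ofReal h1 (ae_of_all _ fun ω => hFnn _)
    have hl2 : ENNReal.ofReal (∫ ω, F (Y ω) * Y ω i ∂P)
        = ∫⁻ ω, ENNReal.ofReal (F (Y ω) * Y ω i) ∂P :=
      ofReal_integral_eq_lintegral_ofReal h2
        (ae_of_all _ fun ω => mul_nonneg (hFnn _) (hYpos ω i))
    rw [← hl1, ← hl2, ← ENNReal.ofReal_mul (hθpos i).le, hre]
  -- independence factorization
  have factor : ∀ (i : Fin n) (φ ψ : (Fin n → ℝ) → ℝ≥0∞), Measurable φ → Measurable ψ →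
      ∫⁻ ω, φ (Y ω) * ψ (Z i ω) ∂P
        = (∫⁻ ω, φ (Y ω) ∂P) * ∫⁻ ω, ψ (Z i ω) ∂P :=
    fun i φ ψ hφ hψ =>
      lintegral_mul_eq_lintegral_mul_lintegral_of_indepFun''
        (hφ.comp hYm).aemeasurable (hψ.comp (hZm i)).aemeasurable
        ((hindep i).comp hφ hψ)
  -- monotone convergence in the truncation parameter
  have lim : ∀ (g h e : Ω → ℝ), Measurable g → Measurable h → Measurable e →
      (∀ ω, 0 ≤ g ω) → (∀ ω, 0 ≤ e ω) →
      Tendsto (fun M : ℕ => ∫⁻ ω, ENNReal.ofReal (g ω * min (h ω) (M:ℝ) * e ω) ∂P) atTop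
        (𝓝 (∫⁻ ω, ENNReal.ofReal (g ω * h ω * e ω) ∂P)) := by
    intro g h e hg hh he hg0 he0
    apply lintegral_tendsto_of_tendsto_of_monotone
    · intro M
      exact ((hg.mul (hh.min measurable_const)).mul he).ennreal_ofReal.aemeasurable
    · refine ae_of_all _ fun ω M N hMN => ?_
      apply ENNReal.ofReal_le_ofReal
      refine mul_le_mul_of_nonneg_right ?_ (he0 ω)
      exact mul_le_mul_of_nonneg_left (min_le_min le_rfl (Nat.cast_le.mpr hMN)) (hg0 ω)
    · refine ae_of_all _ fun ω => ?_
      apply tendsto_atTop_of_eventually_const (i₀ := ⌈h ω⌉₊)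
      intro M hM
      rw [min_eq_left (le_trans (Nat.le_ceil _) (Nat.cast_le.mpr hM))]
  -- the indicator quantity of interest
  set S : ℝ≥0∞ :=
    ∫⁻ ω, ({ω' | Z j ω' j = 0}.indicator (fun ω'' => ENNReal.ofReal (Z j ω'' k))) ω ∂P with hS
  have hset : MeasurableSet {ω' | Z j ω' j = 0} :=
    (hZc j j) (measurableSet_singleton 0)
  -- main inequality for each rate l
  have main : ∀ l : ℝ, 0 < l →
      ENNReal.ofReal (θ j) * S ≤ ENNReal.ofReal (θ k) * ENNReal.ofReal (1 / l) := by
    intro l hl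
    -- the exponential test function
    set E : ℝ → ℝ := fun t => Real.exp (-(l * max t 0)) with hE
    have hE0 : ∀ t, 0 < E t := fun t => Real.exp_pos _
    have hE1 : ∀ t, E t ≤ 1 := by
      intro t
      apply Real.exp_le_one_iff.mpr
      have : 0 ≤ l * max t 0 := mul_nonneg hl.le (le_max_right _ _)
      linarith
    have hEm : Measurable E :=
      Real.measurable_exp.comp ((measurable_const.mul (measurable_id.max measurable_const)).neg)
    have hEadd : ∀ s t : ℝ, 0 ≤ s → 0 ≤ t → E (s + t) = E s * E t := by
      intro s t hs ht
      simp only [hE]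
      rw [max_eq_left (add_nonneg hs ht), max_eq_left hs, max_eq_left ht,
        ← Real.exp_add]
      ring_nf
    have hEbound : ∀ t : ℝ, 0 ≤ t → t * E t ≤ 1 / l := by
      intro t ht
      simp only [hE]
      rw [max_eq_left ht]
      exact size_biased_aux_exp_bound hl ht
    -- the quantities
    set a : ℝ≥0∞ := ∫⁻ ω, ENNReal.ofReal (E (Y ω j)) ∂P with ha
    set b : ℝ≥0∞ := ∫⁻ ω, ENNReal.ofReal (E (Z j ω j)) ∂P with hb
    set b' : ℝ≥0∞ := ∫⁻ ω, ENNReal.ofReal (E (Z k ω j)) ∂P with hb'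
    set c : ℝ≥0∞ := ∫⁻ ω, ENNReal.ofReal (Z j ω k * E (Z j ω j)) ∂P with hc
    set d : ℝ≥0∞ := ∫⁻ ω, ENNReal.ofReal (Z k ω j * E (Z k ω j)) ∂P with hd
    set u : ℝ≥0∞ := ∫⁻ ω, ENNReal.ofReal (E (Y ω j) * Y ω j) ∂P with hu
    set v : ℝ≥0∞ := ∫⁻ ω, ENNReal.ofReal (E (Y ω j) * Y ω k) ∂P with hv
    set T : ℝ≥0∞ := ∫⁻ ω, ENNReal.ofReal (E (Y ω j) * Y ω k * Y ω j) ∂P with hT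
    -- basic bounds
    have hone : (∫⁻ (_ : Ω), (1:ℝ≥0∞) ∂P) = 1 := by simp
    have hble : b ≤ 1 := by
      rw [hb, ← hone]
      exact lintegral_mono fun ω => by
        simpa using ENNReal.ofReal_le_one.mpr (hE1 _)
    have hb'le : b' ≤ 1 := by
      rw [hb', ← hone]
      exact lintegral_mono fun ω => by
        simpa using ENNReal.ofReal_le_one.mpr (hE1 _)
    have hale : a ≤ 1 := by
      rw [ha, ← hone]
      exact lintegral_mono fun ω => by
        simpa using ENNReal.ofReal_le_one.mpr (hE1 _)
    have hdle : d ≤ ENNReal.ofReal (1 / l) := by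
      have : ∀ ω, ENNReal.ofReal (Z k ω j * E (Z k ω j)) ≤ ENNReal.ofReal (1 / l) :=
        fun ω => ENNReal.ofReal_le_ofReal (hEbound _ (hZpos k ω j))
      calc d ≤ ∫⁻ (_ : Ω), ENNReal.ofReal (1 / l) ∂P := lintegral_mono this
        _ = ENNReal.ofReal (1 / l) := by simp
    have ha0 : a ≠ 0 := by
      intro h0
      have hmeasE : Measurable fun ω => ENNReal.ofReal (E (Y ω j)) :=
        (hEm.comp (hYc j)).ennreal_ofReal
      have hae := (lintegral_eq_zero_iff hmeasE).mp h0
      have hne : (ae P).NeBot := ae_neBot.2 (IsProbabilityMeasure.ne_zero P)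
      obtain ⟨ω, hω⟩ := hae.exists
      exact absurd hω (by simpa using (ENNReal.ofReal_pos.mpr (hE0 (Y ω j))).ne')
    have hafin : a ≠ ⊤ := (lt_of_le_of_lt hale ENNReal.one_lt_top).ne
    have hbfin : b ≠ ⊤ := (lt_of_le_of_lt hble ENNReal.one_lt_top).ne
    have hb'fin : b' ≠ ⊤ := (lt_of_le_of_lt hb'le ENNReal.one_lt_top).ne
    -- equation 1 : θj * (a * b) = u
    have eq1 : ENNReal.ofReal (θ j) * (a * b) = u := by
      have hk := key j (fun x => E (x j)) (hEm.comp (measurable_pi_apply j))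
        (fun x => (hE0 _).le) ⟨1, fun x => by rw [abs_of_nonneg (hE0 _).le]; exact hE1 _⟩
      have hsplit : ∀ ω, ENNReal.ofReal (E ((Y ω + Z j ω) j))
          = ENNReal.ofReal (E (Y ω j)) * ENNReal.ofReal (E (Z j ω j)) := by
        intro ω
        rw [Pi.add_apply, hEadd _ _ (hYpos ω j) (hZpos j ω j),
          ENNReal.ofReal_mul (hE0 _).le]
      rw [lintegral_congr hsplit] at hk
      rw [factor j (fun x => ENNReal.ofReal (E (x j))) (fun x => ENNReal.ofReal (E (x j)))
        ((hEm.comp (measurable_pi_apply j)).ennreal_ofReal)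
        ((hEm.comp (measurable_pi_apply j)).ennreal_ofReal)] at hk
      exact hk
    -- equation 2 : θk * (a * b') = v
    have eq2 : ENNReal.ofReal (θ k) * (a * b') = v := by
      have hk := key k (fun x => E (x j)) (hEm.comp (measurable_pi_apply j))
        (fun x => (hE0 _).le) ⟨1, fun x => by rw [abs_of_nonneg (hE0 _).le]; exact hE1 _⟩
      have hsplit : ∀ ω, ENNReal.ofReal (E ((Y ω + Z k ω) j))
          = ENNReal.ofReal (E (Y ω j)) * ENNReal.ofReal (E (Z k ω j)) := by
        intro ω
        rw [Pi.add_apply, hEadd _ _ (hYpos ω j) (hZpos k ω j),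
          ENNReal.ofReal_mul (hE0 _).le]
      rw [lintegral_congr hsplit] at hk
      rw [factor k (fun x => ENNReal.ofReal (E (x j))) (fun x => ENNReal.ofReal (E (x j)))
        ((hEm.comp (measurable_pi_apply j)).ennreal_ofReal)
        ((hEm.comp (measurable_pi_apply j)).ennreal_ofReal)] at hk
      exact hk
    -- equation 3 : θj * (v * b + a * c) = T
    have eq3 : ENNReal.ofReal (θ j) * (v * b + a * c) = T := by
      have hmnn : ∀ (x : Fin n → ℝ) (M : ℕ), (0:ℝ) ≤ min (max (x k) 0) (M:ℝ) :=
        fun x M => le_min (le_max_right _ _) (Nat.cast_nonneg _)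
      have step3 : ∀ M : ℕ,
          ENNReal.ofReal (θ j) *
            ∫⁻ ω, ENNReal.ofReal
              (E (Y ω j + Z j ω j) * min (Y ω k + Z j ω k) (M:ℝ)) ∂P
          = ∫⁻ ω, ENNReal.ofReal (E (Y ω j) * min (Y ω k) (M:ℝ) * Y ω j) ∂P := by
        intro M
        have hk := key j (fun x => E (x j) * min (max (x k) 0) (M:ℝ))
          ((hEm.comp (measurable_pi_apply j)).mul
            (((measurable_pi_apply k).max measurable_const).min measurable_const))
          (fun x => mul_nonneg (hE0 _).le (hmnn x M))
          ⟨(M:ℝ), fun x => by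
            rw [abs_of_nonneg (mul_nonneg (hE0 _).le (hmnn x M))]
            calc E (x j) * min (max (x k) 0) (M:ℝ) ≤ 1 * (M:ℝ) :=
                  mul_le_mul (hE1 _) (min_le_right _ _) (hmnn x M) zero_le_one
              _ = (M:ℝ) := one_mul _⟩
        have hA : (∫⁻ ω, ENNReal.ofReal
              (E ((Y ω + Z j ω) j) * min (max ((Y ω + Z j ω) k) 0) (M:ℝ)) ∂P)
            = ∫⁻ ω, ENNReal.ofReal
              (E (Y ω j + Z j ω j) * min (Y ω k + Z j ω k) (M:ℝ)) ∂P :=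
          lintegral_congr fun ω => by
            rw [Pi.add_apply, Pi.add_apply,
              max_eq_left (add_nonneg (hYpos ω k) (hZpos j ω k))]
        have hB : (∫⁻ ω, ENNReal.ofReal
              (E (Y ω j) * min (max (Y ω k) 0) (M:ℝ) * Y ω j) ∂P)
            = ∫⁻ ω, ENNReal.ofReal (E (Y ω j) * min (Y ω k) (M:ℝ) * Y ω j) ∂P :=
          lintegral_congr fun ω => by rw [max_eq_left (hYpos ω k)]
        rw [← hA, ← hB]
        exact hk
      have tL : Tendsto (fun M : ℕ => ∫⁻ ω, ENNReal.ofReal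
            (E (Y ω j + Z j ω j) * min (Y ω k + Z j ω k) (M:ℝ)) ∂P) atTop
          (𝓝 (∫⁻ ω, ENNReal.ofReal
            (E (Y ω j + Z j ω j) * (Y ω k + Z j ω k)) ∂P)) := by
        have := lim (fun ω => E (Y ω j + Z j ω j)) (fun ω => Y ω k + Z j ω k)
          (fun _ => 1) (hEm.comp ((hYc j).add (hZc j j))) ((hYc k).add (hZc j k))
          measurable_const (fun ω => (hE0 _).le) (fun _ => zero_le_one)
        simpa [mul_one] using this
      have tL' : Tendsto (fun M : ℕ => ENNReal.ofReal (θ j) * ∫⁻ ω, ENNReal.ofReal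
            (E (Y ω j + Z j ω j) * min (Y ω k + Z j ω k) (M:ℝ)) ∂P) atTop
          (𝓝 (ENNReal.ofReal (θ j) * ∫⁻ ω, ENNReal.ofReal
            (E (Y ω j + Z j ω j) * (Y ω k + Z j ω k)) ∂P)) :=
        ENNReal.Tendsto.const_mul tL (Or.inr ENNReal.ofReal_ne_top)
      have tR : Tendsto (fun M : ℕ => ∫⁻ ω, ENNReal.ofReal
            (E (Y ω j) * min (Y ω k) (M:ℝ) * Y ω j) ∂P) atTop (𝓝 T) := by
        have := lim (fun ω => E (Y ω j)) (fun ω => Y ω k) (fun ω => Y ω j)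
          (hEm.comp (hYc j)) (hYc k) (hYc j)
          (fun ω => (hE0 _).le) (fun ω => hYpos ω j)
        exact this
      have t2 : Tendsto (fun M : ℕ => ENNReal.ofReal (θ j) * ∫⁻ ω, ENNReal.ofReal
            (E (Y ω j + Z j ω j) * min (Y ω k + Z j ω k) (M:ℝ)) ∂P) atTop (𝓝 T) := by
        rw [funext step3]
        exact tR
      have eq3' : ENNReal.ofReal (θ j) * ∫⁻ ω, ENNReal.ofReal
            (E (Y ω j + Z j ω j) * (Y ω k + Z j ω k)) ∂P = T :=
        tendsto_nhds_unique tL' t2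
      have hsplit : ∀ ω, ENNReal.ofReal (E (Y ω j + Z j ω j) * (Y ω k + Z j ω k))
          = ENNReal.ofReal (E (Y ω j) * Y ω k) * ENNReal.ofReal (E (Z j ω j))
            + ENNReal.ofReal (E (Y ω j)) * ENNReal.ofReal (Z j ω k * E (Z j ω j)) := by
        intro ω
        have hre : E (Y ω j + Z j ω j) * (Y ω k + Z j ω k)
            = (E (Y ω j) * Y ω k) * E (Z j ω j)
              + E (Y ω j) * (Z j ω k * E (Z j ω j)) := by
          rw [hEadd _ _ (hYpos ω j) (hZpos j ω j)]; ring
        rw [hre, ENNReal.ofReal_add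
            (mul_nonneg (mul_nonneg (hE0 _).le (hYpos ω k)) (hE0 _).le)
            (mul_nonneg (hE0 _).le (mul_nonneg (hZpos j ω k) (hE0 _).le)),
          ENNReal.ofReal_mul (mul_nonneg (hE0 _).le (hYpos ω k)),
          ENNReal.ofReal_mul (q := Z j ω k * E (Z j ω j)) (hE0 _).le]
      have f1 := factor j (fun x => ENNReal.ofReal (E (x j) * x k))
        (fun x => ENNReal.ofReal (E (x j)))
        (((hEm.comp (measurable_pi_apply j)).mul (measurable_pi_apply k)).ennreal_ofReal)
        ((hEm.comp (measurable_pi_apply j)).ennreal_ofReal)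
      have f2 := factor j (fun x => ENNReal.ofReal (E (x j)))
        (fun x => ENNReal.ofReal (x k * E (x j)))
        ((hEm.comp (measurable_pi_apply j)).ennreal_ofReal)
        (((measurable_pi_apply k).mul (hEm.comp (measurable_pi_apply j))).ennreal_ofReal)
      have hLsplit : (∫⁻ ω, ENNReal.ofReal
            (E (Y ω j + Z j ω j) * (Y ω k + Z j ω k)) ∂P) = v * b + a * c := by
        calc (∫⁻ ω, ENNReal.ofReal (E (Y ω j + Z j ω j) * (Y ω k + Z j ω k)) ∂P)
            = ∫⁻ ω, (ENNReal.ofReal (E (Y ω j) * Y ω k) * ENNReal.ofReal (E (Z j ω j))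
              + ENNReal.ofReal (E (Y ω j)) * ENNReal.ofReal (Z j ω k * E (Z j ω j))) ∂P :=
              lintegral_congr hsplit
          _ = (∫⁻ ω, ENNReal.ofReal (E (Y ω j) * Y ω k) * ENNReal.ofReal (E (Z j ω j)) ∂P)
              + ∫⁻ ω, ENNReal.ofReal (E (Y ω j)) * ENNReal.ofReal (Z j ω k * E (Z j ω j)) ∂P :=
              lintegral_add_left
                ((((hEm.comp (hYc j)).mul (hYc k)).ennreal_ofReal).mul
                  ((hEm.comp (hZc j j)).ennreal_ofReal)) _
          _ = v * b + a * c := congrArg₂ (· + ·) f1 f2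
      rw [← hLsplit]
      exact eq3'
    -- equation 4 : θk * (u * b' + a * d) = T
    have eq4 : ENNReal.ofReal (θ k) * (u * b' + a * d) = T := by
      have hmnn : ∀ (x : Fin n → ℝ) (M : ℕ), (0:ℝ) ≤ min (max (x j) 0) (M:ℝ) :=
        fun x M => le_min (le_max_right _ _) (Nat.cast_nonneg _)
      have step4 : ∀ M : ℕ,
          ENNReal.ofReal (θ k) *
            ∫⁻ ω, ENNReal.ofReal
              (E (Y ω j + Z k ω j) * min (Y ω j + Z k ω j) (M:ℝ)) ∂P
          = ∫⁻ ω, ENNReal.ofReal (E (Y ω j) * min (Y ω j) (M:ℝ) * Y ω k) ∂P := by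
        intro M
        have hk := key k (fun x => E (x j) * min (max (x j) 0) (M:ℝ))
          ((hEm.comp (measurable_pi_apply j)).mul
            (((measurable_pi_apply j).max measurable_const).min measurable_const))
          (fun x => mul_nonneg (hE0 _).le (hmnn x M))
          ⟨(M:ℝ), fun x => by
            rw [abs_of_nonneg (mul_nonneg (hE0 _).le (hmnn x M))]
            calc E (x j) * min (max (x j) 0) (M:ℝ) ≤ 1 * (M:ℝ) :=
                  mul_le_mul (hE1 _) (min_le_right _ _) (hmnn x M) zero_le_one
              _ = (M:ℝ) := one_mul _⟩
        have hA : (∫⁻ ω, ENNReal.ofReal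
              (E ((Y ω + Z k ω) j) * min (max ((Y ω + Z k ω) j) 0) (M:ℝ)) ∂P)
            = ∫⁻ ω, ENNReal.ofReal
              (E (Y ω j + Z k ω j) * min (Y ω j + Z k ω j) (M:ℝ)) ∂P :=
          lintegral_congr fun ω => by
            rw [Pi.add_apply,
              max_eq_left (add_nonneg (hYpos ω j) (hZpos k ω j))]
        have hB : (∫⁻ ω, ENNReal.ofReal
              (E (Y ω j) * min (max (Y ω j) 0) (M:ℝ) * Y ω k) ∂P)
            = ∫⁻ ω, ENNReal.ofReal (E (Y ω j) * min (Y ω j) (M:ℝ) * Y ω k) ∂P :=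
          lintegral_congr fun ω => by rw [max_eq_left (hYpos ω j)]
        rw [← hA, ← hB]
        exact hk
      have tL : Tendsto (fun M : ℕ => ∫⁻ ω, ENNReal.ofReal
            (E (Y ω j + Z k ω j) * min (Y ω j + Z k ω j) (M:ℝ)) ∂P) atTop
          (𝓝 (∫⁻ ω, ENNReal.ofReal
            (E (Y ω j + Z k ω j) * (Y ω j + Z k ω j)) ∂P)) := by
        have := lim (fun ω => E (Y ω j + Z k ω j)) (fun ω => Y ω j + Z k ω j)
          (fun _ => 1) (hEm.comp ((hYc j).add (hZc k j))) ((hYc j).add (hZc k j))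
          measurable_const (fun ω => (hE0 _).le) (fun _ => zero_le_one)
        simpa [mul_one] using this
      have tL' : Tendsto (fun M : ℕ => ENNReal.ofReal (θ k) * ∫⁻ ω, ENNReal.ofReal
            (E (Y ω j + Z k ω j) * min (Y ω j + Z k ω j) (M:ℝ)) ∂P) atTop
          (𝓝 (ENNReal.ofReal (θ k) * ∫⁻ ω, ENNReal.ofReal
            (E (Y ω j + Z k ω j) * (Y ω j + Z k ω j)) ∂P)) :=
        ENNReal.Tendsto.const_mul tL (Or.inr ENNReal.ofReal_ne_top)
      have hTT : (∫⁻ ω, ENNReal.ofReal (E (Y ω j) * Y ω j * Y ω k) ∂P) = T :=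
        lintegral_congr fun ω => by
          rw [show E (Y ω j) * Y ω j * Y ω k = E (Y ω j) * Y ω k * Y ω j from by ring]
      have tR : Tendsto (fun M : ℕ => ∫⁻ ω, ENNReal.ofReal
            (E (Y ω j) * min (Y ω j) (M:ℝ) * Y ω k) ∂P) atTop (𝓝 T) := by
        have := lim (fun ω => E (Y ω j)) (fun ω => Y ω j) (fun ω => Y ω k)
          (hEm.comp (hYc j)) (hYc j) (hYc k)
          (fun ω => (hE0 _).le) (fun ω => hYpos ω k)
        rw [← hTT]
        exact this
      have t2 : Tendsto (fun M : ℕ => ENNReal.ofReal (θ k) * ∫⁻ ω, ENNReal.ofReal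
            (E (Y ω j + Z k ω j) * min (Y ω j + Z k ω j) (M:ℝ)) ∂P) atTop (𝓝 T) := by
        rw [funext step4]
        exact tR
      have eq4' : ENNReal.ofReal (θ k) * ∫⁻ ω, ENNReal.ofReal
            (E (Y ω j + Z k ω j) * (Y ω j + Z k ω j)) ∂P = T :=
        tendsto_nhds_unique tL' t2
      have hsplit : ∀ ω, ENNReal.ofReal (E (Y ω j + Z k ω j) * (Y ω j + Z k ω j))
          = ENNReal.ofReal (E (Y ω j) * Y ω j) * ENNReal.ofReal (E (Z k ω j))
            + ENNReal.ofReal (E (Y ω j)) * ENNReal.ofReal (Z k ω j * E (Z k ω j)) := by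
        intro ω
        have hre : E (Y ω j + Z k ω j) * (Y ω j + Z k ω j)
            = (E (Y ω j) * Y ω j) * E (Z k ω j)
              + E (Y ω j) * (Z k ω j * E (Z k ω j)) := by
          rw [hEadd _ _ (hYpos ω j) (hZpos k ω j)]; ring
        rw [hre, ENNReal.ofReal_add
            (mul_nonneg (mul_nonneg (hE0 _).le (hYpos ω j)) (hE0 _).le)
            (mul_nonneg (hE0 _).le (mul_nonneg (hZpos k ω j) (hE0 _).le)),
          ENNReal.ofReal_mul (mul_nonneg (hE0 _).le (hYpos ω j)),
          ENNReal.ofReal_mul (q := Z k ω j * E (Z k ω j)) (hE0 _).le]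
      have f1 := factor k (fun x => ENNReal.ofReal (E (x j) * x j))
        (fun x => ENNReal.ofReal (E (x j)))
        (((hEm.comp (measurable_pi_apply j)).mul (measurable_pi_apply j)).ennreal_ofReal)
        ((hEm.comp (measurable_pi_apply j)).ennreal_ofReal)
      have f2 := factor k (fun x => ENNReal.ofReal (E (x j)))
        (fun x => ENNReal.ofReal (x j * E (x j)))
        ((hEm.comp (measurable_pi_apply j)).ennreal_ofReal)
        (((measurable_pi_apply j).mul (hEm.comp (measurable_pi_apply j))).ennreal_ofReal)
      have hLsplit : (∫⁻ ω, ENNReal.ofReal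
            (E (Y ω j + Z k ω j) * (Y ω j + Z k ω j)) ∂P) = u * b' + a * d := by
        calc (∫⁻ ω, ENNReal.ofReal (E (Y ω j + Z k ω j) * (Y ω j + Z k ω j)) ∂P)
            = ∫⁻ ω, (ENNReal.ofReal (E (Y ω j) * Y ω j) * ENNReal.ofReal (E (Z k ω j))
              + ENNReal.ofReal (E (Y ω j)) * ENNReal.ofReal (Z k ω j * E (Z k ω j))) ∂P :=
              lintegral_congr hsplit
          _ = (∫⁻ ω, ENNReal.ofReal (E (Y ω j) * Y ω j) * ENNReal.ofReal (E (Z k ω j)) ∂P)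
              + ∫⁻ ω, ENNReal.ofReal (E (Y ω j)) * ENNReal.ofReal (Z k ω j * E (Z k ω j)) ∂P :=
              lintegral_add_left
                ((((hEm.comp (hYc j)).mul (hYc j)).ennreal_ofReal).mul
                  ((hEm.comp (hZc k j)).ennreal_ofReal)) _
          _ = u * b' + a * d := congrArg₂ (· + ·) f1 f2
      rw [← hLsplit]
      exact eq4'
    -- cancellation
    have keyalg : ENNReal.ofReal (θ j) * c ≤ ENNReal.ofReal (θ k) * ENNReal.ofReal (1 / l) := by
      have hW : ENNReal.ofReal (θ j) * (v * b)
          = ENNReal.ofReal (θ k) * (u * b') := by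
        rw [← eq1, ← eq2]; ring
      have hWfin : ENNReal.ofReal (θ j) * (v * b) ≠ ⊤ := by
        rw [← eq2]
        refine ENNReal.mul_ne_top ENNReal.ofReal_ne_top
          (ENNReal.mul_ne_top (ENNReal.mul_ne_top ENNReal.ofReal_ne_top
            (ENNReal.mul_ne_top hafin hb'fin)) hbfin)
      have h3 : ENNReal.ofReal (θ j) * (v * b) + ENNReal.ofReal (θ j) * (a * c) = T := by
        rw [← mul_add]; exact eq3
      have h4 : ENNReal.ofReal (θ j) * (v * b) + ENNReal.ofReal (θ k) * (a * d) = T := by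
        rw [hW, ← mul_add]; exact eq4
      have hcancel : ENNReal.ofReal (θ j) * (a * c) = ENNReal.ofReal (θ k) * (a * d) :=
        (ENNReal.add_right_inj hWfin).mp (h3.trans h4.symm)
      have hcancel' : a * (ENNReal.ofReal (θ j) * c) = a * (ENNReal.ofReal (θ k) * d) := by
        calc a * (ENNReal.ofReal (θ j) * c) = ENNReal.ofReal (θ j) * (a * c) := by ring
          _ = ENNReal.ofReal (θ k) * (a * d) := hcancel
          _ = a * (ENNReal.ofReal (θ k) * d) := by ring
      have := (ENNReal.mul_right_inj ha0 hafin).mp hcancel'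
      rw [this]
      exact mul_le_mul_right hdle _
    -- S ≤ c
    have hSc : S ≤ c := by
      rw [hS, hc]
      refine lintegral_mono fun ω => ?_
      by_cases hw : Z j ω j = 0
      · rw [Set.indicator_of_mem (show ω ∈ {ω' | Z j ω' j = 0} from hw)]
        have : E (Z j ω j) = 1 := by
          rw [hw]; simp [hE]
        rw [this, mul_one]
      · rw [Set.indicator_of_notMem (show ω ∉ {ω' | Z j ω' j = 0} from hw)]
        exact zero_le
    calc ENNReal.ofReal (θ j) * S ≤ ENNReal.ofReal (θ j) * c := mul_le_mul_right hSc _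
      _ ≤ ENNReal.ofReal (θ k) * ENNReal.ofReal (1 / l) := keyalg
  -- conclude S = 0
  have hS0 : S = 0 := by
    refine le_antisymm ?_ zero_le
    refine ENNReal.le_of_forall_pos_le_add fun ε hε _ => ?_
    rw [zero_add]
    have hεr : (0:ℝ) < (ε:ℝ) := hε
    set l : ℝ := θ k / (θ j * ε) with hldef
    have hl : 0 < l := div_pos (hθpos k) (mul_pos (hθpos j) hεr)
    have hr : θ k * (1 / l) = θ j * (ε:ℝ) := by
      rw [hldef]
      have h1 := (hθpos k).ne'
      have h2 := (hθpos j).ne'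
      field_simp
    have h1 : ENNReal.ofReal (θ k) * ENNReal.ofReal (1 / l)
        = ENNReal.ofReal (θ j) * ENNReal.ofReal (ε:ℝ) := by
      rw [← ENNReal.ofReal_mul (hθpos k).le, ← ENNReal.ofReal_mul (hθpos j).le, hr]
    have h2 := main l hl
    rw [h1] at h2
    have := (ENNReal.mul_le_mul_iff_right (by simpa using (hθpos j))
      ENNReal.ofReal_ne_top).mp h2
    simpa using this
  -- from S = 0 to the a.e. statement
  have hmeas : Measurable
      (({ω' | Z j ω' j = 0}).indicator fun ω'' => ENNReal.ofReal (Z j ω'' k)) :=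
    ((hZc j k).ennreal_ofReal).indicator hset
  rw [hS, lintegral_eq_zero_iff hmeas] at hS0
  filter_upwards [hS0] with ω hω
  intro hk0
  by_contra hj0
  have hjz : Z j ω j = 0 := le_antisymm (not_lt.mp hj0) (hZpos j ω j)
  rw [Set.indicator_of_mem (show ω ∈ {ω' | Z j ω' j = 0} from hjz)] at hω
  simp only [Pi.zero_apply] at hω
  rw [ENNReal.ofReal_eq_zero] at hω
  exact absurd hk0 (not_lt.mpr hω)
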